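/- Under the same data, the Darboux formula r⁽¹⁾ = 2iψ₁ψ₂(λ₁-λ₂)/(ψ₂φ₁ - ψ₁φ₂) simplifies to r⁽¹⁾ = i(λ₁-λ₂)·e^{i(λ₁+λ₂)X/(2λ₁λ₂) + i(λ₁+λ₂)T}·sech( i(λ₁-λ₂)X/(2λ₁λ₂) - i(λ₁-λ₂)T ), and consequently q⁽¹⁾(X,T)·r⁽¹⁾(X,T) = (λ₁-λ₂)²·sech²( i(λ₁-λ₂)X/(2λ₁λ₂) - i(λ₁-λ₂)T ). -/

import Mathlib

open Complex

noncomputable def csech (z : ℂ) : ℂ := 2 / (Complex.exp z + Complex.exp (-z))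

theorem one_soliton_r_and_product (lam₁ lam₂ : ℂ) (h1 : lam₁ ≠ 0) (h2 : lam₂ ≠ 0)
    (hne : lam₁ ≠ lam₂) (X T : ℝ)
    (φ₁ ψ₁ φ₂ ψ₂ : ℂ)
    (hφ₁ : φ₁ = Complex.exp (-(I * X) / (2 * lam₁) - I * lam₁ * T))
    (hψ₁ : ψ₁ = Complex.exp ((I * X) / (2 * lam₁) + I * lam₁ * T))
    (hφ₂ : φ₂ = Complex.exp (-(I * X) / (2 * lam₂) - I * lam₂ * T))
    (hψ₂ : ψ₂ = -Complex.exp ((I * X) / (2 * lam₂) + I * lam₂ * T))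
    (hden : ψ₂ * φ₁ - ψ₁ * φ₂ ≠ 0)
    (hsech : Complex.exp (I * (lam₁ - lam₂) * X / (2 * lam₁ * lam₂) - I * (lam₁ - lam₂) * T)
      + Complex.exp (-(I * (lam₁ - lam₂) * X / (2 * lam₁ * lam₂) - I * (lam₁ - lam₂) * T)) ≠ 0) :
    (2 * I * ψ₁ * ψ₂ * (lam₁ - lam₂) / (ψ₂ * φ₁ - ψ₁ * φ₂)
      = I * (lam₁ - lam₂)
        * Complex.exp ((I * (lam₁ + lam₂) * X) / (2 * lam₁ * lam₂) + I * (lam₁ + lam₂) * T)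
        * csech (I * (lam₁ - lam₂) * X / (2 * lam₁ * lam₂) - I * (lam₁ - lam₂) * T)) ∧
    ((2 * I * φ₁ * φ₂ * (lam₁ - lam₂) / (ψ₂ * φ₁ - ψ₁ * φ₂))
        * (2 * I * ψ₁ * ψ₂ * (lam₁ - lam₂) / (ψ₂ * φ₁ - ψ₁ * φ₂))
      = (lam₁ - lam₂) ^ 2
        * (csech (I * (lam₁ - lam₂) * X / (2 * lam₁ * lam₂) - I * (lam₁ - lam₂) * T)) ^ 2) := by
  have k1 : ((I * X) / (2 * lam₂) + I * lam₂ * T) + (-(I * X) / (2 * lam₁) - I * lam₁ * T)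
      = (I * (lam₁ - lam₂) * X / (2 * lam₁ * lam₂) - I * (lam₁ - lam₂) * T) := by
    field_simp; ring
  have k2 : ((I * X) / (2 * lam₁) + I * lam₁ * T) + (-(I * X) / (2 * lam₂) - I * lam₂ * T)
      = -(I * (lam₁ - lam₂) * X / (2 * lam₁ * lam₂) - I * (lam₁ - lam₂) * T) := by
    field_simp; ring
  have k3 : ((I * X) / (2 * lam₁) + I * lam₁ * T) + ((I * X) / (2 * lam₂) + I * lam₂ * T)
      = ((I * (lam₁ + lam₂) * X) / (2 * lam₁ * lam₂) + I * (lam₁ + lam₂) * T) := by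
    field_simp; ring
  have k4 : (-(I * X) / (2 * lam₁) - I * lam₁ * T) + (-(I * X) / (2 * lam₂) - I * lam₂ * T)
      = -((I * (lam₁ + lam₂) * X) / (2 * lam₁ * lam₂) + I * (lam₁ + lam₂) * T) := by
    field_simp; ring
  have ha : ψ₂ * φ₁
      = -Complex.exp (I * (lam₁ - lam₂) * X / (2 * lam₁ * lam₂) - I * (lam₁ - lam₂) * T) := by
    rw [hψ₂, hφ₁, neg_mul, ← Complex.exp_add, k1]
  have hb : ψ₁ * φ₂
      = Complex.exp (-(I * (lam₁ - lam₂) * X / (2 * lam₁ * lam₂) - I * (lam₁ - lam₂) * T)) := by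
    rw [hψ₁, hφ₂, ← Complex.exp_add, k2]
  have hc : ψ₁ * ψ₂
      = -Complex.exp ((I * (lam₁ + lam₂) * X) / (2 * lam₁ * lam₂) + I * (lam₁ + lam₂) * T) := by
    rw [hψ₁, hψ₂, mul_neg, ← Complex.exp_add, k3]
  have hd : φ₁ * φ₂
      = Complex.exp (-((I * (lam₁ + lam₂) * X) / (2 * lam₁ * lam₂) + I * (lam₁ + lam₂) * T)) := by
    rw [hφ₁, hφ₂, ← Complex.exp_add, k4]
  have hep : Complex.exp ((I * (lam₁ + lam₂) * X) / (2 * lam₁ * lam₂) + I * (lam₁ + lam₂) * T)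
      * Complex.exp (-((I * (lam₁ + lam₂) * X) / (2 * lam₁ * lam₂) + I * (lam₁ + lam₂) * T))
      = 1 := by rw [Complex.exp_neg]; exact mul_inv_cancel₀ (Complex.exp_ne_zero _)
  have hden2 : ψ₂ * φ₁ - ψ₁ * φ₂
      = -(Complex.exp (I * (lam₁ - lam₂) * X / (2 * lam₁ * lam₂) - I * (lam₁ - lam₂) * T)
        + Complex.exp (-(I * (lam₁ - lam₂) * X / (2 * lam₁ * lam₂) - I * (lam₁ - lam₂) * T))) := by
    rw [ha, hb]; ring
  have hq : 2 * I * φ₁ * φ₂ * (lam₁ - lam₂) = 2 * I * (φ₁ * φ₂) * (lam₁ - lam₂) := by ring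
  have hr : 2 * I * ψ₁ * ψ₂ * (lam₁ - lam₂) = 2 * I * (ψ₁ * ψ₂) * (lam₁ - lam₂) := by ring
  rw [csech, hq, hr, hc, hd, hden2]
  generalize hS : Complex.exp (I * (lam₁ - lam₂) * X / (2 * lam₁ * lam₂) - I * (lam₁ - lam₂) * T)
      + Complex.exp (-(I * (lam₁ - lam₂) * X / (2 * lam₁ * lam₂) - I * (lam₁ - lam₂) * T)) = S
    at hsech ⊢
  generalize hP : Complex.exp ((I * (lam₁ + lam₂) * X) / (2 * lam₁ * lam₂) + I * (lam₁ + lam₂) * T)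
      = P at hep ⊢
  generalize hQ : Complex.exp (-((I * (lam₁ + lam₂) * X) / (2 * lam₁ * lam₂)
      + I * (lam₁ + lam₂) * T)) = Q at hep ⊢
  constructor
  · field_simp
  · field_simp
    linear_combination (-P * Q) * Complex.I_sq + hep
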